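/- Let a, r, R, L be positive real numbers satisfying (3/2)a + (9/4)r²R + (3/2)a r² R² + (3/2)(r² + (3/2)r⁴)R³ ≤ R and r²((9/4) + (9/2)R² + 3aR² + (27/4)R²r²) ≤ L < 1. Then there exists a unique function h ∈ C²₀([0,r]) with ‖h''‖_{C⁰([0,r])} ≤ R that solves the shifted Cauchy problem: h''(x) = (1 + h'(x)²)[h'(x)(x - 1/x) - h(x) - a] for x ∈ (0,r]. -/

import Mathlib

open Set MeasureTheory intervalIntegral Filter Topology

/-- First derivative within `[0, r]`. -/
noncomputable def d1 (r : ℝ) (f : ℝ → ℝ) : ℝ → ℝ := derivWithin f (Icc 0 r)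

/-- Second derivative within `[0, r]`. -/
noncomputable def d2 (r : ℝ) (f : ℝ → ℝ) : ℝ → ℝ := derivWithin (d1 r f) (Icc 0 r)

/-- `h ∈ C²₀([0,r])` solves the shifted Cauchy problem
`h''(x) = (1 + h'(x)²)[h'(x)(x - 1/x) - h(x) - a]` for `x ∈ (0, r]`,
with `h(0) = h'(0) = 0`. -/
def ShiftedCP (a r : ℝ) (h : ℝ → ℝ) : Prop :=
  ContDiffOn ℝ 2 h (Icc 0 r) ∧ h 0 = 0 ∧ d1 r h 0 = 0 ∧
  ∀ x ∈ Ioc (0:ℝ) r,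
    d2 r h x = (1 + (d1 r h x) ^ 2) * (d1 r h x * (x - 1 / x) - h x - a)


namespace CPaux
variable {w w' : ℝ → ℝ} {a r R D x : ℝ}

noncomputable def Pm (w : ℝ → ℝ) (x : ℝ) : ℝ := ∫ t in (0:ℝ)..x, w t
noncomputable def Qm (w : ℝ → ℝ) (x : ℝ) : ℝ := ∫ t in (0:ℝ)..x, Pm w t
noncomputable def Am (w : ℝ → ℝ) (x : ℝ) : ℝ := ∫ s in (0:ℝ)..(1:ℝ), w (s * x)
noncomputable def Inn (a : ℝ) (w : ℝ → ℝ) (x : ℝ) : ℝ :=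
  (1 + Pm w x ^ 2) * (Pm w x * x - Qm w x - a) - Pm w x ^ 2 * Am w x

lemma hasDerivAt_Pm (hw : Continuous w) (x : ℝ) : HasDerivAt (Pm w) (w x) x :=
  (hw.integral_hasStrictDerivAt 0 x).hasDerivAt
lemma continuous_Pm (hw : Continuous w) : Continuous (Pm w) :=
  continuous_iff_continuousAt.2 fun x => (hasDerivAt_Pm hw x).continuousAt

lemma norm_Pm_le {C : ℝ} (hb : ∀ t, |w t| ≤ C) (hx : 0 ≤ x) : |Pm w x| ≤ C * x := by
  have h := intervalIntegral.norm_integral_le_of_norm_le_const (a := 0) (b := x) (C := C)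
    (f := w) (fun t _ => by simpa using hb t)
  simpa [Pm, Real.norm_eq_abs, abs_of_nonneg hx] using h

lemma norm_int_le_sq {f : ℝ → ℝ} {C x : ℝ} (hC : 0 ≤ C)
    (hf : ∀ t, 0 < t → t ≤ x → |f t| ≤ C * t)
    (hx : 0 ≤ x) : |∫ t in (0:ℝ)..x, f t| ≤ C * x ^ 2 / 2 := by
  have key : ∀ᵐ t ∂(volume.restrict (uIoc (0:ℝ) x)), ‖f t‖ ≤ C * t := by
    rw [uIoc_of_le hx]
    filter_upwards [ae_restrict_mem measurableSet_Ioc] with t ht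
    simpa [Real.norm_eq_abs] using hf t ht.1 ht.2
  have hint : IntervalIntegrable (fun t => C * t) volume 0 x :=
    (continuous_const.mul continuous_id).intervalIntegrable 0 x
  have h := intervalIntegral.norm_integral_le_abs_of_norm_le (f := f) key hint
  rw [intervalIntegral.integral_const_mul, integral_id] at h
  rw [Real.norm_eq_abs] at h
  calc |∫ t in (0:ℝ)..x, f t| ≤ |C * ((x^2 - 0^2)/2)| := h
    _ = C * x^2/2 := by rw [show C * ((x^2 - 0^2)/2) = C * x^2/2 by ring, abs_of_nonneg (by positivity)]

lemma norm_Qm_le {C : ℝ} (hC : 0 ≤ C) (hb : ∀ t, |w t| ≤ C) (hx : 0 ≤ x) :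
    |Qm w x| ≤ C * x ^ 2 / 2 :=
  norm_int_le_sq hC (fun t ht htx => norm_Pm_le hb ht.le) hx

lemma norm_Am_le {C : ℝ} (hb : ∀ t, |w t| ≤ C) : |Am w x| ≤ C := by
  have h := intervalIntegral.norm_integral_le_of_norm_le_const (a := 0) (b := 1) (C := C)
    (f := fun s => w (s * x)) (fun t _ => by simpa using hb (t * x))
  simpa [Am, Real.norm_eq_abs] using h

lemma Pm_sub (hw : Continuous w) (hw' : Continuous w') (x : ℝ) :
    Pm w x - Pm w' x = Pm (fun t => w t - w' t) x :=
  (intervalIntegral.integral_sub (hw.intervalIntegrable _ _) (hw'.intervalIntegrable _ _)).symm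

lemma Qm_sub (hw : Continuous w) (hw' : Continuous w') (x : ℝ) :
    Qm w x - Qm w' x = Qm (fun t => w t - w' t) x := by
  unfold Qm
  rw [← intervalIntegral.integral_sub ((continuous_Pm hw).intervalIntegrable _ _)
    ((continuous_Pm hw').intervalIntegrable _ _)]
  exact intervalIntegral.integral_congr fun t _ => (Pm_sub hw hw' t)

lemma Am_sub (hw : Continuous w) (hw' : Continuous w') (x : ℝ) :
    Am w x - Am w' x = Am (fun t => w t - w' t) x := by
  unfold Am
  rw [← intervalIntegral.integral_sub
    (Continuous.intervalIntegrable (by fun_prop) _ _)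
    (Continuous.intervalIntegrable (by fun_prop) _ _)]

lemma Inn_bound (ha : 0 < a) (hR : 0 < R) (hb : ∀ t, |w t| ≤ R) (hx : 0 ≤ x) (hxr : x ≤ r) :
    |Inn a w x| ≤ a + 3/2*R*r^2 + a*R^2*r^2 + 3/2*R^3*r^4 + R^3*r^2 := by
  set p := Pm w x with hp
  set q := Qm w x with hq
  set A := Am w x with hA
  have hpb : |p| ≤ R * x := norm_Pm_le hb hx
  have hqb : |q| ≤ R * x ^ 2 / 2 := norm_Qm_le hR.le hb hx
  have hAb : |A| ≤ R := norm_Am_le hb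
  have hp2 : p ^ 2 ≤ (R * x) ^ 2 :=
    sq_le_sq' (by linarith [(abs_le.1 hpb).1]) (abs_le.1 hpb).2
  have h1 : |Inn a w x| ≤ (1 + p ^ 2) * (|p| * x + |q| + a) + p ^ 2 * |A| := by
    rw [Inn, ← hp, ← hq, ← hA]
    calc |(1 + p ^ 2) * (p * x - q - a) - p ^ 2 * A|
        ≤ |(1 + p ^ 2) * (p * x - q - a)| + |p ^ 2 * A| := abs_sub _ _
      _ ≤ (1 + p ^ 2) * (|p| * x + |q| + a) + p ^ 2 * |A| := by
          rw [abs_mul, abs_mul, abs_of_pos (show (0:ℝ) < 1 + p ^ 2 by positivity), abs_sq]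
          gcongr
          calc |p * x - q - a| ≤ |p * x - q| + |a| := abs_sub _ _
            _ ≤ |p * x| + |q| + |a| := by gcongr; exact abs_sub _ _
            _ = |p| * x + |q| + a := by
                rw [abs_mul, abs_of_nonneg hx, abs_of_pos ha]
  have h2 : (1 + p ^ 2) * (|p| * x + |q| + a) + p ^ 2 * |A|
      ≤ (1 + (R*x)^2) * ((R*x)*x + R*x^2/2 + a) + (R*x)^2 * R := by
    gcongr <;> first | positivity | exact hp2 | exact hpb | exact hqb | exact hAb
  have hx2 : x^2 ≤ r^2 := by nlinarith
  have hx4 : x^4 ≤ r^4 := by nlinarith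
  refine h1.trans (h2.trans ?_)
  nlinarith [mul_nonneg ha.le (sq_nonneg R), mul_pos hR (mul_pos hR hR),
    mul_nonneg (mul_nonneg hR.le hR.le) hR.le, sq_nonneg R]


noncomputable def Tf (a : ℝ) (w : ℝ → ℝ) (x : ℝ) : ℝ :=
  Inn a w x - ∫ s in (0:ℝ)..(1:ℝ), s * Inn a w (s * x)

lemma continuous_Qm (hw : Continuous w) : Continuous (Qm w) :=
  continuous_iff_continuousAt.2 fun x =>
    (((continuous_Pm hw).integral_hasStrictDerivAt 0 x).hasDerivAt).continuousAt

lemma continuous_Am (hw : Continuous w) : Continuous (Am w) := by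
  exact continuous_parametric_intervalIntegral_of_continuous'
    (f := fun x s => w (s * x)) (hw.comp (continuous_snd.mul continuous_fst)) 0 1

lemma continuous_Inn (a : ℝ) (hw : Continuous w) : Continuous (Inn a w) := by
  unfold Inn
  have hp := continuous_Pm hw
  have hq := continuous_Qm hw
  have hA := continuous_Am hw
  fun_prop

lemma Tf_bound (ha : 0 < a) (hR : 0 < R) (hw : Continuous w)
    (hb : ∀ t, |w t| ≤ R) (hx : 0 ≤ x) (hxr : x ≤ r) :
    |Tf a w x| ≤ 3/2 * (a + 3/2*R*r^2 + a*R^2*r^2 + 3/2*R^3*r^4 + R^3*r^2) := by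
  set N := a + 3/2*R*r^2 + a*R^2*r^2 + 3/2*R^3*r^4 + R^3*r^2 with hN
  have hr : 0 ≤ r := hx.trans hxr
  have hN0 : 0 ≤ N := by rw [hN]; positivity
  have hInt : |∫ s in (0:ℝ)..(1:ℝ), s * Inn a w (s * x)| ≤ N / 2 := by
    have key : ∀ᵐ s ∂(volume.restrict (uIoc (0:ℝ) 1)), ‖s * Inn a w (s * x)‖ ≤ N * s := by
      rw [uIoc_of_le zero_le_one]
      filter_upwards [ae_restrict_mem measurableSet_Ioc] with s hs
      rw [Real.norm_eq_abs, abs_mul, abs_of_pos hs.1, mul_comm]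
      have hsx0 : 0 ≤ s * x := mul_nonneg hs.1.le hx
      have hsxr : s * x ≤ r := by nlinarith [hs.1.le, hs.2]
      exact mul_le_mul_of_nonneg_right (Inn_bound ha hR hb hsx0 hsxr) hs.1.le
    have hint : IntervalIntegrable (fun s => N * s) volume 0 1 :=
      (continuous_const.mul continuous_id).intervalIntegrable 0 1
    have h := intervalIntegral.norm_integral_le_abs_of_norm_le key hint
    rw [intervalIntegral.integral_const_mul, integral_id, Real.norm_eq_abs] at h
    calc |∫ s in (0:ℝ)..(1:ℝ), s * Inn a w (s * x)| ≤ |N * ((1^2 - 0^2)/2)| := h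
      _ = N / 2 := by rw [show N * (((1:ℝ)^2 - 0^2)/2) = N/2 by ring, abs_of_nonneg (by positivity)]
  calc |Tf a w x| ≤ |Inn a w x| + |∫ s in (0:ℝ)..(1:ℝ), s * Inn a w (s * x)| := abs_sub _ _
    _ ≤ N + N / 2 := add_le_add (Inn_bound ha hR hb hx hxr) hInt
    _ = 3/2 * N := by ring

set_option maxHeartbeats 1000000 in
lemma Inn_sub_bound (ha : 0 < a) (hR : 0 < R)
    (hw : Continuous w) (hw' : Continuous w')
    (hb : ∀ t, |w t| ≤ R) (hb' : ∀ t, |w' t| ≤ R)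
    (hd : ∀ t, |w t - w' t| ≤ D) (hx : 0 ≤ x) (hxr : x ≤ r) :
    |Inn a w x - Inn a w' x|
      ≤ D * x ^ 2 * (2*a*R + 3*R^2*r^2 + 3/2 + 3/2*R^2*r^2 + 3*R^2) := by
  have hD0 : 0 ≤ D := (abs_nonneg _).trans (hd 0)
  set p := Pm w x with hp
  set q := Qm w x with hq
  set A := Am w x with hA
  set p' := Pm w' x with hp'
  set q' := Qm w' x with hq'
  set A' := Am w' x with hA'
  have hpb : |p| ≤ R * x := norm_Pm_le hb hx
  have hpb' : |p'| ≤ R * x := norm_Pm_le hb' hx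
  have hqb : |q| ≤ R * x ^ 2 / 2 := norm_Qm_le hR.le hb hx
  have hAb : |A| ≤ R := norm_Am_le hb
  have hAb' : |A'| ≤ R := norm_Am_le hb'
  have hpd : |p - p'| ≤ D * x := by
    rw [hp, hp', Pm_sub hw hw']; exact norm_Pm_le hd hx
  have hqd : |q - q'| ≤ D * x ^ 2 / 2 := by
    rw [hq, hq', Qm_sub hw hw']; exact norm_Qm_le hD0 hd hx
  have hAd : |A - A'| ≤ D := by
    rw [hA, hA', Am_sub hw hw']; exact norm_Am_le hd
  have hp2 : p' ^ 2 ≤ (R * x) ^ 2 :=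
    sq_le_sq' (by linarith [(abs_le.1 hpb').1]) (abs_le.1 hpb').2
  have hppd : |p ^ 2 - p' ^ 2| ≤ (2 * (R * x)) * (D * x) := by
    have e : p ^ 2 - p' ^ 2 = (p + p') * (p - p') := by ring
    rw [e, abs_mul]
    have h1 : |p + p'| ≤ 2 * (R * x) := by
      calc |p + p'| ≤ |p| + |p'| := abs_add_le _ _
        _ ≤ 2 * (R * x) := by linarith
    exact mul_le_mul h1 hpd (abs_nonneg _) (by positivity)
  have e : Inn a w x - Inn a w' x
      = (p ^ 2 - p' ^ 2) * (p * x - q - a) + (1 + p' ^ 2) * ((p - p') * x - (q - q'))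
        - (p ^ 2 - p' ^ 2) * A - p' ^ 2 * (A - A') := by
    rw [Inn, Inn, ← hp, ← hq, ← hA, ← hp', ← hq', ← hA']; ring
  have tri : |Inn a w x - Inn a w' x|
      ≤ |p ^ 2 - p' ^ 2| * |p * x - q - a| + (1 + p' ^ 2) * |(p - p') * x - (q - q')|
        + |p ^ 2 - p' ^ 2| * |A| + p' ^ 2 * |A - A'| := by
    rw [e]
    calc |(p ^ 2 - p' ^ 2) * (p * x - q - a) + (1 + p' ^ 2) * ((p - p') * x - (q - q'))
        - (p ^ 2 - p' ^ 2) * A - p' ^ 2 * (A - A')|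
        ≤ |(p ^ 2 - p' ^ 2) * (p * x - q - a) + (1 + p' ^ 2) * ((p - p') * x - (q - q'))
          - (p ^ 2 - p' ^ 2) * A| + |p' ^ 2 * (A - A')| := abs_sub _ _
      _ ≤ |(p ^ 2 - p' ^ 2) * (p * x - q - a) + (1 + p' ^ 2) * ((p - p') * x - (q - q'))|
          + |(p ^ 2 - p' ^ 2) * A| + |p' ^ 2 * (A - A')| := by
            gcongr; exact abs_sub _ _
      _ ≤ |(p ^ 2 - p' ^ 2) * (p * x - q - a)| + |(1 + p' ^ 2) * ((p - p') * x - (q - q'))|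
          + |(p ^ 2 - p' ^ 2) * A| + |p' ^ 2 * (A - A')| := by
            gcongr; exact abs_add_le _ _
      _ = |p ^ 2 - p' ^ 2| * |p * x - q - a| + (1 + p' ^ 2) * |(p - p') * x - (q - q')|
          + |p ^ 2 - p' ^ 2| * |A| + p' ^ 2 * |A - A'| := by
            rw [abs_mul, abs_mul, abs_mul, abs_mul,
              abs_of_pos (show (0:ℝ) < 1 + p' ^ 2 by positivity), abs_sq]
  have t1 : |p * x - q - a| ≤ (R * x) * x + R * x ^ 2 / 2 + a := by
    calc |p * x - q - a| ≤ |p * x - q| + |a| := abs_sub _ _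
      _ ≤ |p * x| + |q| + |a| := by gcongr; exact abs_sub _ _
      _ = |p| * x + |q| + a := by rw [abs_mul, abs_of_nonneg hx, abs_of_pos ha]
      _ ≤ (R * x) * x + R * x ^ 2 / 2 + a := by gcongr
  have t2 : |(p - p') * x - (q - q')| ≤ (D * x) * x + D * x ^ 2 / 2 := by
    calc |(p - p') * x - (q - q')| ≤ |(p - p') * x| + |q - q'| := abs_sub _ _
      _ = |p - p'| * x + |q - q'| := by rw [abs_mul, abs_of_nonneg hx]
      _ ≤ (D * x) * x + D * x ^ 2 / 2 := by gcongr
  have big : |p ^ 2 - p' ^ 2| * |p * x - q - a| + (1 + p' ^ 2) * |(p - p') * x - (q - q')|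
        + |p ^ 2 - p' ^ 2| * |A| + p' ^ 2 * |A - A'|
      ≤ ((2 * (R * x)) * (D * x)) * ((R * x) * x + R * x ^ 2 / 2 + a)
        + (1 + (R * x) ^ 2) * ((D * x) * x + D * x ^ 2 / 2)
        + ((2 * (R * x)) * (D * x)) * R + (R * x) ^ 2 * D := by
    gcongr <;>
      first | positivity | exact hppd | exact t1 | exact hp2 | exact t2 | exact hAb | exact hAd
  refine tri.trans (big.trans ?_)
  have hx2 : x ^ 2 ≤ r ^ 2 := by nlinarith
  have key : 0 ≤ D * (R ^ 2 * (x ^ 2 * (r ^ 2 - x ^ 2))) :=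
    mul_nonneg hD0 (mul_nonneg (sq_nonneg R) (mul_nonneg (sq_nonneg x) (sub_nonneg.2 hx2)))
  nlinarith [key]


lemma Tf_sub_bound (ha : 0 < a) (hR : 0 < R)
    (hw : Continuous w) (hw' : Continuous w')
    (hb : ∀ t, |w t| ≤ R) (hb' : ∀ t, |w' t| ≤ R)
    (hd : ∀ t, |w t - w' t| ≤ D) (hx : 0 ≤ x) (hxr : x ≤ r) :
    |Tf a w x - Tf a w' x|
      ≤ 5/4 * D * r ^ 2 * (2*a*R + 3*R^2*r^2 + 3/2 + 3/2*R^2*r^2 + 3*R^2) := by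
  have hD0 : 0 ≤ D := (abs_nonneg _).trans (hd 0)
  set M := 2*a*R + 3*R^2*r^2 + 3/2 + 3/2*R^2*r^2 + 3*R^2 with hM
  have hr0 : 0 ≤ r := hx.trans hxr
  have hM0 : 0 ≤ M := by rw [hM]; positivity
  have hint_sub : (∫ s in (0:ℝ)..(1:ℝ), s * Inn a w (s * x))
      - (∫ s in (0:ℝ)..(1:ℝ), s * Inn a w' (s * x))
      = ∫ s in (0:ℝ)..(1:ℝ), (s * Inn a w (s * x) - s * Inn a w' (s * x)) := by
    rw [intervalIntegral.integral_sub
      (Continuous.intervalIntegrable (by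
        exact continuous_id.mul ((continuous_Inn a hw).comp
          (continuous_id.mul continuous_const))) _ _)
      (Continuous.intervalIntegrable (by
        exact continuous_id.mul ((continuous_Inn a hw').comp
          (continuous_id.mul continuous_const))) _ _)]
  have hIb : |∫ s in (0:ℝ)..(1:ℝ), (s * Inn a w (s * x) - s * Inn a w' (s * x))|
      ≤ D * x ^ 2 * M / 4 := by
    have key : ∀ᵐ s ∂(volume.restrict (uIoc (0:ℝ) 1)),
        ‖s * Inn a w (s * x) - s * Inn a w' (s * x)‖ ≤ (D * x ^ 2 * M) * s ^ 3 := by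
      rw [uIoc_of_le zero_le_one]
      filter_upwards [ae_restrict_mem measurableSet_Ioc] with s hs
      have hsx0 : 0 ≤ s * x := mul_nonneg hs.1.le hx
      have hsxr : s * x ≤ r := by nlinarith [hs.1.le, hs.2]
      have h := Inn_sub_bound ha hR hw hw' hb hb' hd hsx0 hsxr
      rw [Real.norm_eq_abs, show s * Inn a w (s * x) - s * Inn a w' (s * x)
        = s * (Inn a w (s * x) - Inn a w' (s * x)) by ring, abs_mul, abs_of_pos hs.1]
      calc s * |Inn a w (s * x) - Inn a w' (s * x)| ≤ s * (D * (s * x) ^ 2 * M) :=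
            mul_le_mul_of_nonneg_left h hs.1.le
        _ = (D * x ^ 2 * M) * s ^ 3 := by ring
    have hint : IntervalIntegrable (fun s => (D * x ^ 2 * M) * s ^ 3) volume 0 1 :=
      (continuous_const.mul (continuous_pow 3)).intervalIntegrable 0 1
    have h := intervalIntegral.norm_integral_le_abs_of_norm_le key hint
    rw [intervalIntegral.integral_const_mul, integral_pow, Real.norm_eq_abs] at h
    calc |∫ s in (0:ℝ)..(1:ℝ), (s * Inn a w (s * x) - s * Inn a w' (s * x))|
        ≤ |(D * x ^ 2 * M) * (((1:ℝ) ^ (3+1) - 0 ^ (3+1)) / (3+1))| := h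
      _ = D * x ^ 2 * M / 4 := by
          rw [show (D * x ^ 2 * M) * (((1:ℝ) ^ (3+1) - 0 ^ (3+1)) / (3+1)) = D * x ^ 2 * M / 4
            by ring, abs_of_nonneg (by positivity)]
  have hIx : |Inn a w x - Inn a w' x| ≤ D * x ^ 2 * M :=
    Inn_sub_bound ha hR hw hw' hb hb' hd hx hxr
  have e : Tf a w x - Tf a w' x = (Inn a w x - Inn a w' x)
      - ((∫ s in (0:ℝ)..(1:ℝ), s * Inn a w (s * x))
        - (∫ s in (0:ℝ)..(1:ℝ), s * Inn a w' (s * x))) := by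
    rw [Tf, Tf]; ring
  have hxx : x ^ 2 ≤ r ^ 2 := by nlinarith
  calc |Tf a w x - Tf a w' x|
      ≤ |Inn a w x - Inn a w' x|
        + |∫ s in (0:ℝ)..(1:ℝ), (s * Inn a w (s * x) - s * Inn a w' (s * x))| := by
        rw [e, hint_sub]; exact abs_sub _ _
    _ ≤ D * x ^ 2 * M + D * x ^ 2 * M / 4 := add_le_add hIx hIb
    _ = 5/4 * D * x ^ 2 * M := by ring
    _ ≤ 5/4 * D * r ^ 2 * M := by
        have : 5/4 * D * x ^ 2 * M = 5/4 * (D * (M * x ^ 2)) := by ring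
        rw [this, show 5/4 * D * r ^ 2 * M = 5/4 * (D * (M * r ^ 2)) by ring]
        gcongr


lemma vanish_of_deriv_self_div {W : ℝ → ℝ} {r' C : ℝ}
    (hWc : Continuous W)
    (hd : ∀ x ∈ Ioc (0:ℝ) r', HasDerivAt W (W x / x) x)
    (hb : ∀ x ∈ Ioc (0:ℝ) r', |W x| ≤ C * x ^ 2) :
    ∀ x ∈ Ioc (0:ℝ) r', W x = 0 := by
  intro x hx
  set F : ℝ → ℝ := fun y => W y / y with hF
  have hconst : ∀ y ∈ Ioc (0:ℝ) x, F x = F y := by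
    intro y hy
    have hcont : ContinuousOn F (Icc y x) := by
      apply ContinuousOn.div hWc.continuousOn continuousOn_id
      intro t ht; exact ne_of_gt (lt_of_lt_of_le hy.1 ht.1)
    have hderiv : ∀ t ∈ Ico y x, HasDerivWithinAt F 0 (Ici t) t := by
      intro t ht
      have ht0 : 0 < t := lt_of_lt_of_le hy.1 ht.1
      have htr : t ≤ r' := le_trans (le_of_lt ht.2) hx.2
      have h1 : HasDerivAt F ((W t / t * t - W t * 1) / t ^ 2) t :=
        (hd t ⟨ht0, htr⟩).div (hasDerivAt_id t) (ne_of_gt ht0)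
      have h2 : (W t / t * t - W t * 1) / t ^ 2 = 0 := by
        rw [div_mul_cancel₀ _ (ne_of_gt ht0)]; simp
      rw [h2] at h1
      exact h1.hasDerivWithinAt
    exact constant_of_has_deriv_right_zero hcont hderiv x ⟨hy.2, le_refl x⟩
  have hC0 : 0 ≤ C := by
    have h := hb x hx
    nlinarith [abs_nonneg (W x), mul_pos hx.1 hx.1]
  have hten : Tendsto (fun y : ℝ => C * y) (𝓝[>] (0:ℝ)) (𝓝 0) := by
    have h : Tendsto (fun y : ℝ => C * y) (𝓝 (0:ℝ)) (𝓝 (C * 0)) :=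
      Continuous.tendsto (by fun_prop) 0
    rw [mul_zero] at h
    exact h.mono_left nhdsWithin_le_nhds
  have hle : ∀ᶠ y in 𝓝[>] (0:ℝ), |F x| ≤ C * y := by
    filter_upwards [Ioc_mem_nhdsGT_of_mem ⟨le_refl (0:ℝ), hx.1⟩, self_mem_nhdsWithin]
      with y hy hy0
    have hy0' : (0:ℝ) < y := hy0
    rw [hconst y hy, hF]
    have habs : |W y / y| = |W y| / y := by rw [abs_div, abs_of_pos hy0']
    rw [habs, div_le_iff₀ hy0']
    calc |W y| ≤ C * y ^ 2 := hb y ⟨hy.1, le_trans hy.2 hx.2⟩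
      _ = C * y * y := by ring
  have hFx : |F x| ≤ 0 := ge_of_tendsto hten hle
  have hFx0 : F x = 0 := abs_nonpos_iff.mp hFx
  rw [hF] at hFx0
  exact (div_eq_zero_iff.mp hFx0).resolve_right (ne_of_gt hx.1)

lemma vanish_of_deriv_zero {W : ℝ → ℝ} {r' : ℝ}
    (hWc : Continuous W) (hW0 : W 0 = 0)
    (hd : ∀ x ∈ Ioc (0:ℝ) r', HasDerivAt W 0 x) :
    ∀ x ∈ Ioc (0:ℝ) r', W x = 0 := by
  intro x hx
  have hconst : ∀ y ∈ Ioc (0:ℝ) x, W x = W y := by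
    intro y hy
    exact constant_of_has_deriv_right_zero (hWc.continuousOn)
      (fun t ht => (hd t ⟨lt_of_lt_of_le hy.1 ht.1, le_trans (le_of_lt ht.2) hx.2⟩).hasDerivWithinAt)
      x ⟨hy.2, le_refl x⟩
  have h1 : Tendsto W (𝓝[>] (0:ℝ)) (𝓝 (W 0)) :=
    (hWc.tendsto 0).mono_left nhdsWithin_le_nhds
  have h2 : W =ᶠ[𝓝[>] (0:ℝ)] fun _ => W x := by
    filter_upwards [Ioc_mem_nhdsGT_of_mem ⟨le_refl (0:ℝ), hx.1⟩] with y hy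
    exact (hconst y hy).symm
  have h3 : Tendsto (fun _ : ℝ => W x) (𝓝[>] (0:ℝ)) (𝓝 (W 0)) := h1.congr' h2
  have := tendsto_nhds_unique h3 tendsto_const_nhds
  rw [← this, hW0]

lemma ftc_reconstruct {f g : ℝ → ℝ} {r : ℝ}
    (hf : ContinuousOn f (Icc 0 r))
    (hd : ∀ t ∈ Icc (0:ℝ) r, HasDerivWithinAt f (g t) (Icc 0 r) t)
    (hg : ContinuousOn g (Icc 0 r)) {x : ℝ} (hx : x ∈ Icc (0:ℝ) r) :
    ∫ t in (0:ℝ)..x, g t = f x - f 0 := by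
  rcases eq_or_lt_of_le hx.1 with h0 | h0
  · rw [← h0]; simp
  apply intervalIntegral.integral_eq_sub_of_hasDeriv_right_of_le h0.le
  · exact hf.mono (Icc_subset_Icc le_rfl hx.2)
  · intro t ht
    have htI : t ∈ Icc (0:ℝ) r := ⟨ht.1.le, le_trans ht.2.le hx.2⟩
    refine (hd t htI).mono_of_mem_nhdsWithin ?_
    refine mem_of_superset (Ioc_mem_nhdsGT_of_mem ⟨le_refl t, lt_of_lt_of_le ht.2 hx.2⟩) ?_
    exact fun s hs => ⟨le_trans ht.1.le hs.1.le, hs.2⟩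
  · exact (hg.mono (by rw [uIcc_of_le hx.1]; exact Icc_subset_Icc le_rfl hx.2)).intervalIntegrable

lemma hasDerivAt_Qm (hw : Continuous w) (x : ℝ) : HasDerivAt (Qm w) (Pm w x) x :=
  ((continuous_Pm hw).integral_hasStrictDerivAt 0 x).hasDerivAt

lemma continuous_Tf (a : ℝ) (hw : Continuous w) : Continuous (Tf a w) := by
  unfold Tf
  have hI := continuous_Inn a hw
  have h2 : Continuous fun x : ℝ => ∫ s in (0:ℝ)..(1:ℝ), s * Inn a w (s * x) :=
    continuous_parametric_intervalIntegral_of_continuous'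
      (f := fun x s => s * Inn a w (s * x))
      (continuous_snd.mul (hI.comp (continuous_snd.mul continuous_fst))) 0 1
  fun_prop

lemma Am_eq (hw : Continuous w) {x : ℝ} (hx : x ≠ 0) : Am w x = Pm w x / x := by
  have h := integral_comp_mul_right (a := (0:ℝ)) (b := 1) w hx
  simp only [zero_mul, one_mul, smul_eq_mul] at h
  rw [Am, h, Pm]
  ring

lemma scale_int (g : ℝ → ℝ) {x : ℝ} (hx : x ≠ 0) :
    ∫ s in (0:ℝ)..1, s * g (s * x) = (∫ t in (0:ℝ)..x, t * g t) / x ^ 2 := by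
  have h := integral_comp_mul_right (a := (0:ℝ)) (b := 1) (fun t => t * g t) hx
  simp only [zero_mul, one_mul, smul_eq_mul] at h
  have h2 : ∀ s : ℝ, (s * x) * g (s * x) = x * (s * g (s * x)) := fun s => by ring
  rw [intervalIntegral.integral_congr (g := fun s => x * (s * g (s*x))) (fun s _ => h2 s)] at h
  rw [intervalIntegral.integral_const_mul] at h
  field_simp at h ⊢
  linarith [h]

end CPaux

set_option maxHeartbeats 2000000 in
open CPaux in
/-- Under the smallness conditions on `a, r, R, L`, there exists a unique
`h ∈ C²₀([0,r])` with `‖h''‖_{C⁰([0,r])} ≤ R` solving the shifted Cauchy problem. -/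
theorem shifted_CP_existence_uniqueness_C2 (a r R L : ℝ)
    (ha : 0 < a) (hr : 0 < r) (hR : 0 < R) (hL : 0 < L)
    (h1 : 3 / 2 * a + 9 / 4 * r ^ 2 * R + 3 / 2 * a * r ^ 2 * R ^ 2
            + 3 / 2 * (r ^ 2 + 3 / 2 * r ^ 4) * R ^ 3 ≤ R)
    (h2 : r ^ 2 * (9 / 4 + 9 / 2 * R ^ 2 + 3 * a * R ^ 2 + 27 / 4 * R ^ 2 * r ^ 2) ≤ L)
    (hL1 : L < 1) :
    ∃ h : ℝ → ℝ,
      (ShiftedCP a r h ∧ ∀ x ∈ Icc (0:ℝ) r, |d2 r h x| ≤ R) ∧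
      ∀ h' : ℝ → ℝ, (ShiftedCP a r h' ∧ ∀ x ∈ Icc (0:ℝ) r, |d2 r h' x| ≤ R) →
        EqOn h' h (Icc 0 r) := by
  classical
  have hud : UniqueDiffOn ℝ (Icc (0:ℝ) r) := uniqueDiffOn_Icc hr
  -- extension operator
  set ext : C(Icc (0:ℝ) r, ℝ) → ℝ → ℝ := fun u => IccExtend hr.le u with hext
  have ext_cont : ∀ u, Continuous (ext u) := fun u => u.continuous.Icc_extend'
  have ext_bound : ∀ (u : C(Icc (0:ℝ) r, ℝ)) (t : ℝ), |ext u t| ≤ ‖u‖ := fun u t => by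
    simpa [hext, IccExtend, Real.norm_eq_abs] using u.norm_coe_le_norm (projIcc 0 r hr.le t)
  have ext_eq : ∀ (u : C(Icc (0:ℝ) r, ℝ)) (t : ℝ) (ht : t ∈ Icc (0:ℝ) r),
      ext u t = u ⟨t, ht⟩ := fun u t ht => IccExtend_of_mem hr.le u ht
  have ext_sub : ∀ (u v : C(Icc (0:ℝ) r, ℝ)) (t : ℝ),
      |ext u t - ext v t| ≤ ‖u - v‖ := fun u v t => by
    have e : ext u t - ext v t = (u - v) (projIcc 0 r hr.le t) := by
      simp [hext, IccExtend]
    rw [e]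
    simpa [Real.norm_eq_abs] using (u - v).norm_coe_le_norm (projIcc 0 r hr.le t)
  -- selfmap bound: 3/2 * N ≤ R
  have hNle : 3/2 * (a + 3/2*R*r^2 + a*R^2*r^2 + 3/2*R^3*r^4 + R^3*r^2) ≤ R := by nlinarith
  -- contraction bound
  have haR : a ≤ 2/3 * R := by
    have t1 : (0:ℝ) ≤ 9/4 * r^2 * R := by positivity
    have t2 : (0:ℝ) ≤ 3/2 * a * r^2 * R^2 := by positivity
    have t3 : (0:ℝ) ≤ 3/2 * (r^2 + 3/2*r^4) * R^3 := by positivity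
    linarith
  have hLip : 5/4 * r^2 * (2*a*R + 3*R^2*r^2 + 3/2 + 3/2*R^2*r^2 + 3*R^2) ≤ L := by
    have key : 5/2 * (a*R) ≤ 3/8 + 3/4*R^2 + 3*(a*R^2) := by
      nlinarith [mul_nonneg ha.le (sq_nonneg (R - 5/12)), sq_nonneg (R - 25/108)]
    nlinarith [mul_nonneg (sq_nonneg r) (sq_nonneg (r*R)), sq_nonneg (r*R),
      mul_nonneg (sq_nonneg r) (sub_nonneg.2 key)]
  -- the ball S and the operator Φ
  set S := Metric.closedBall (0 : C(Icc (0:ℝ) r, ℝ)) R with hS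
  haveI : Nonempty S := ⟨⟨0, Metric.mem_closedBall_self hR.le⟩⟩
  haveI : CompleteSpace S := Metric.isClosed_closedBall.completeSpace_coe
  have memS : ∀ u : S, ∀ t, |ext u.1 t| ≤ R := fun u t =>
    (ext_bound u.1 t).trans (mem_closedBall_zero_iff.mp u.2)
  have Tf_cont : ∀ u : S, Continuous fun x : Icc (0:ℝ) r => Tf a (ext u.1) x.1 :=
    fun u => (continuous_Tf a (ext_cont u.1)).comp continuous_subtype_val
  have Tf_mem : ∀ u : S,
      (⟨fun x : Icc (0:ℝ) r => Tf a (ext u.1) x.1, Tf_cont u⟩ : C(Icc (0:ℝ) r, ℝ)) ∈ S := by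
    intro u
    show _ ∈ Metric.closedBall (0 : C(Icc (0:ℝ) r, ℝ)) R
    rw [mem_closedBall_zero_iff]
    refine (ContinuousMap.norm_le _ hR.le).mpr fun x => ?_
    rw [ContinuousMap.coe_mk, Real.norm_eq_abs]
    exact (Tf_bound ha hR (ext_cont u.1) (memS u) x.2.1 x.2.2).trans hNle
  set Φ : S → S := fun u => ⟨⟨fun x : Icc (0:ℝ) r => Tf a (ext u.1) x.1, Tf_cont u⟩, Tf_mem u⟩
    with hΦ
  have hΦlip : ∀ u v : S, dist (Φ u) (Φ v) ≤ L * dist u v := by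
    intro u v
    rw [Subtype.dist_eq, ContinuousMap.dist_le (by positivity)]
    intro x
    rw [Real.dist_eq]
    have hd : ∀ t, |ext u.1 t - ext v.1 t| ≤ dist u v := by
      intro t
      rw [Subtype.dist_eq, dist_eq_norm]
      exact ext_sub u.1 v.1 t
    have hb := Tf_sub_bound (D := dist u v) ha hR (ext_cont u.1) (ext_cont v.1)
      (memS u) (memS v) hd x.2.1 x.2.2
    refine hb.trans ?_
    calc 5/4 * dist u v * r^2 * (2*a*R + 3*R^2*r^2 + 3/2 + 3/2*R^2*r^2 + 3*R^2)
        = (5/4 * r^2 * (2*a*R + 3*R^2*r^2 + 3/2 + 3/2*R^2*r^2 + 3*R^2)) * dist u v := by ring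
      _ ≤ L * dist u v := mul_le_mul_of_nonneg_right hLip dist_nonneg
  have hcontr : ContractingWith ⟨L, hL.le⟩ Φ :=
    ⟨by exact_mod_cast hL1, LipschitzWith.of_dist_le_mul hΦlip⟩
  set u0 : S := ContractingWith.fixedPoint Φ hcontr with hu0
  have hfix : Φ u0 = u0 := hcontr.fixedPoint_isFixedPt
  set w0 : ℝ → ℝ := ext u0.1 with hw0
  have hw0c : Continuous w0 := ext_cont u0.1
  have hw0b : ∀ t, |w0 t| ≤ R := memS u0
  have hfixEq : ∀ x ∈ Icc (0:ℝ) r, Tf a w0 x = w0 x := by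
    intro x hx
    have h2 := congrFun (congrArg DFunLike.coe (congrArg Subtype.val hfix)) ⟨x, hx⟩
    have h3 : Tf a w0 x = u0.1 ⟨x, hx⟩ := h2
    rw [h3, hw0, ext_eq u0.1 x hx]
  -- properties of the candidate solution Qm w0
  set N := a + 3/2*R*r^2 + a*R^2*r^2 + 3/2*R^3*r^4 + R^3*r^2 with hN
  have hN0 : 0 ≤ N := by rw [hN]; positivity
  have hInnb : ∀ x, 0 ≤ x → x ≤ r → |Inn a w0 x| ≤ N := fun x hx hxr =>
    Inn_bound ha hR hw0b hx hxr
  have hInnc : Continuous (Inn a w0) := continuous_Inn a hw0c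
  set Jf : ℝ → ℝ := fun x => ∫ t in (0:ℝ)..x, t * Inn a w0 t with hJf
  have hJd : ∀ x, HasDerivAt Jf (x * Inn a w0 x) x := fun x =>
    (Continuous.integral_hasStrictDerivAt (continuous_id.mul hInnc) 0 x).hasDerivAt
  have hJc : Continuous Jf := continuous_iff_continuousAt.2 fun x => (hJd x).continuousAt
  have hfix' : ∀ x ∈ Ioc (0:ℝ) r, w0 x = Inn a w0 x - Jf x / x^2 := by
    intro x hx
    rw [← hfixEq x (Ioc_subset_Icc_self hx)]
    show Tf a w0 x = _
    rw [Tf, scale_int (Inn a w0) (ne_of_gt hx.1)]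
  set W : ℝ → ℝ := fun x => x * Pm w0 x - Jf x with hW
  have hWc : Continuous W := (continuous_id.mul (continuous_Pm hw0c)).sub hJc
  have hWd : ∀ x ∈ Ioc (0:ℝ) r, HasDerivAt W (W x / x) x := by
    intro x hx
    have hx0 : x ≠ 0 := ne_of_gt hx.1
    have hD : HasDerivAt W (1 * Pm w0 x + x * w0 x - x * Inn a w0 x) x :=
      ((hasDerivAt_id x).mul (hasDerivAt_Pm hw0c x)).sub (hJd x)
    have e : 1 * Pm w0 x + x * w0 x - x * Inn a w0 x = W x / x := by
      rw [hfix' x hx]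
      show _ = (x * Pm w0 x - Jf x) / x
      field_simp
      ring
    rwa [e] at hD
  have hWb : ∀ x ∈ Ioc (0:ℝ) r, |W x| ≤ (R + N/2) * x^2 := by
    intro x hx
    have hb1 : |x * Pm w0 x| ≤ R * x^2 := by
      rw [abs_mul, abs_of_pos hx.1]
      calc x * |Pm w0 x| ≤ x * (R * x) :=
            mul_le_mul_of_nonneg_left (norm_Pm_le hw0b hx.1.le) hx.1.le
        _ = R * x^2 := by ring
    have hb2 : |Jf x| ≤ N * x^2 / 2 := by
      rw [hJf]
      refine norm_int_le_sq hN0 (fun t ht htx => ?_) hx.1.le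
      rw [abs_mul, abs_of_pos ht, mul_comm]
      exact mul_le_mul_of_nonneg_right (hInnb t ht.le (htx.trans hx.2)) ht.le
    calc |W x| ≤ |x * Pm w0 x| + |Jf x| := abs_sub _ _
      _ ≤ R * x^2 + N * x^2/2 := add_le_add hb1 hb2
      _ = (R + N/2) * x^2 := by ring
  have hW0 : ∀ x ∈ Ioc (0:ℝ) r, W x = 0 := vanish_of_deriv_self_div hWc hWd hWb
  -- derivatives of the candidate
  have hd1 : ∀ y ∈ Icc (0:ℝ) r, d1 r (Qm w0) y = Pm w0 y := fun y hy =>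
    (hasDerivAt_Qm hw0c y).hasDerivWithinAt.derivWithin (hud y hy)
  have hd2e : ∀ y ∈ Icc (0:ℝ) r, d2 r (Qm w0) y = w0 y := by
    intro y hy
    show derivWithin (d1 r (Qm w0)) (Icc 0 r) y = w0 y
    rw [derivWithin_congr (fun t ht => hd1 t ht) (hd1 y hy)]
    exact (hasDerivAt_Pm hw0c y).hasDerivWithinAt.derivWithin (hud y hy)
  have hODE : ∀ x ∈ Ioc (0:ℝ) r, d2 r (Qm w0) x
      = (1 + (d1 r (Qm w0) x) ^ 2) * (d1 r (Qm w0) x * (x - 1 / x) - Qm w0 x - a) := by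
    intro x hx
    have hxI : x ∈ Icc (0:ℝ) r := Ioc_subset_Icc_self hx
    have hx0 : x ≠ 0 := ne_of_gt hx.1
    rw [hd2e x hxI, hd1 x hxI]
    have hJP : Jf x = x * Pm w0 x := by
      have h := hW0 x hx
      simp only [hW] at h
      linarith
    have e1 : w0 x = Inn a w0 x - Pm w0 x / x := by
      rw [hfix' x hx, hJP]
      field_simp
    rw [e1, Inn, Am_eq hw0c hx0]
    field_simp
    ring
  have hCD : ContDiffOn ℝ 2 (Qm w0) (Icc (0:ℝ) r) := by
    have hQder : deriv (Qm w0) = Pm w0 := funext fun x => (hasDerivAt_Qm hw0c x).deriv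
    have hPder : deriv (Pm w0) = w0 := funext fun x => (hasDerivAt_Pm hw0c x).deriv
    have hc2 : ContDiff ℝ 2 (Qm w0) := by
      rw [← one_add_one_eq_two, contDiff_succ_iff_deriv]
      refine ⟨fun x => (hasDerivAt_Qm hw0c x).differentiableAt, by simp, ?_⟩
      rw [hQder, contDiff_one_iff_deriv]
      exact ⟨fun x => (hasDerivAt_Pm hw0c x).differentiableAt, by rw [hPder]; exact hw0c⟩
    exact hc2.contDiffOn
  refine ⟨Qm w0, ⟨⟨hCD, by simp [Qm], ?_, hODE⟩, fun x hx => by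
    rw [hd2e x hx]; exact hw0b x⟩, ?_⟩
  · rw [hd1 0 (left_mem_Icc.mpr hr.le)]
    simp [Pm]
  -- uniqueness
  rintro h' ⟨⟨hcd', h0', hd10', hode'⟩, hbnd'⟩
  have hc1 : ContDiffOn ℝ 1 (d1 r h') (Icc (0:ℝ) r) := hcd'.derivWithin hud (by norm_num)
  have hg2c : ContinuousOn (d2 r h') (Icc (0:ℝ) r) :=
    hc1.continuousOn_derivWithin hud (by norm_num)
  set u' : C(Icc (0:ℝ) r, ℝ) := ⟨(Icc (0:ℝ) r).restrict (d2 r h'), hg2c.restrict⟩ with hu'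
  have hu'b : ‖u'‖ ≤ R := (ContinuousMap.norm_le _ hR.le).mpr fun x => by
    rw [Real.norm_eq_abs]; exact hbnd' x.1 x.2
  set w1 : ℝ → ℝ := ext u' with hw1
  have hw1c : Continuous w1 := ext_cont u'
  have hw1b : ∀ t, |w1 t| ≤ R := fun t => (ext_bound u' t).trans hu'b
  have hw1I : ∀ t, ∀ ht : t ∈ Icc (0:ℝ) r, w1 t = d2 r h' t := by
    intro t ht
    rw [hw1, ext_eq u' t ht]
    rfl
  have hP1 : ∀ x ∈ Icc (0:ℝ) r, Pm w1 x = d1 r h' x := by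
    intro x hx
    have hcong : ∫ t in (0:ℝ)..x, w1 t = ∫ t in (0:ℝ)..x, d2 r h' t :=
      intervalIntegral.integral_congr fun t ht => hw1I t (by
        rw [uIcc_of_le hx.1] at ht; exact ⟨ht.1, ht.2.trans hx.2⟩)
    have hftc := ftc_reconstruct (g := d2 r h') hc1.continuousOn
      (fun t ht => ((hc1.differentiableOn one_ne_zero) t ht).hasDerivWithinAt) hg2c hx
    rw [Pm, hcong, hftc, hd10', sub_zero]
  have hQ1 : ∀ x ∈ Icc (0:ℝ) r, Qm w1 x = h' x := by
    intro x hx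
    have hcong : ∫ t in (0:ℝ)..x, Pm w1 t = ∫ t in (0:ℝ)..x, d1 r h' t :=
      intervalIntegral.integral_congr fun t ht => hP1 t (by
        rw [uIcc_of_le hx.1] at ht; exact ⟨ht.1, ht.2.trans hx.2⟩)
    have hftc := ftc_reconstruct (g := d1 r h') hcd'.continuousOn
      (fun t ht => ((hcd'.differentiableOn (by norm_num)) t ht).hasDerivWithinAt)
      hc1.continuousOn hx
    rw [Qm, hcong, hftc, h0', sub_zero]
  have hfix1 : ∀ x ∈ Ioc (0:ℝ) r, w1 x = Inn a w1 x - Pm w1 x / x := by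
    intro x hx
    have hxI : x ∈ Icc (0:ℝ) r := Ioc_subset_Icc_self hx
    have hx0 : x ≠ 0 := ne_of_gt hx.1
    rw [hw1I x hxI, hode' x hx, ← hP1 x hxI, ← hQ1 x hxI, Inn, Am_eq hw1c hx0]
    field_simp
    ring
  set Jf1 : ℝ → ℝ := fun x => ∫ t in (0:ℝ)..x, t * Inn a w1 t with hJf1
  have hInn1c : Continuous (Inn a w1) := continuous_Inn a hw1c
  have hJ1d : ∀ x, HasDerivAt Jf1 (x * Inn a w1 x) x := fun x =>
    (Continuous.integral_hasStrictDerivAt (continuous_id.mul hInn1c) 0 x).hasDerivAt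
  set W1 : ℝ → ℝ := fun x => x * Pm w1 x - Jf1 x with hW1
  have hW1c : Continuous W1 := (continuous_id.mul (continuous_Pm hw1c)).sub
    (continuous_iff_continuousAt.2 fun x => (hJ1d x).continuousAt)
  have hW1d : ∀ x ∈ Ioc (0:ℝ) r, HasDerivAt W1 0 x := by
    intro x hx
    have hx0 : x ≠ 0 := ne_of_gt hx.1
    have hD : HasDerivAt W1 (1 * Pm w1 x + x * w1 x - x * Inn a w1 x) x :=
      ((hasDerivAt_id x).mul (hasDerivAt_Pm hw1c x)).sub (hJ1d x)
    have e : 1 * Pm w1 x + x * w1 x - x * Inn a w1 x = 0 := by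
      rw [hfix1 x hx]
      field_simp
      ring
    rwa [e] at hD
  have hW10 : W1 0 = 0 := by
    simp [hW1, hJf1, Pm]
  have hW1z : ∀ x ∈ Ioc (0:ℝ) r, W1 x = 0 := vanish_of_deriv_zero hW1c hW10 hW1d
  have hfixt : ∀ x ∈ Ioc (0:ℝ) r, Tf a w1 x = w1 x := by
    intro x hx
    have hx0 : x ≠ 0 := ne_of_gt hx.1
    have hJP : (∫ t in (0:ℝ)..x, t * Inn a w1 t) = x * Pm w1 x := by
      have h := hW1z x hx
      simp only [hW1, hJf1] at h
      linarith
    rw [Tf, scale_int (Inn a w1) hx0, hJP, hfix1 x hx]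
    field_simp
  have hfixt0 : Tf a w1 0 = w1 0 := by
    have ht1 : Tendsto (fun y => Tf a w1 y - w1 y) (𝓝[>] (0:ℝ)) (𝓝 (Tf a w1 0 - w1 0)) :=
      (((continuous_Tf a hw1c).sub hw1c).tendsto 0).mono_left nhdsWithin_le_nhds
    have ht2 : (fun y => Tf a w1 y - w1 y) =ᶠ[𝓝[>] (0:ℝ)] fun _ => (0:ℝ) := by
      filter_upwards [Ioc_mem_nhdsGT_of_mem ⟨le_refl (0:ℝ), hr⟩] with y hy
      rw [hfixt y hy, sub_self]
    have ht3 := tendsto_nhds_unique (ht1.congr' ht2) tendsto_const_nhds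
    linarith
  have hfixI : ∀ x ∈ Icc (0:ℝ) r, Tf a w1 x = w1 x := by
    intro x hx
    rcases eq_or_lt_of_le hx.1 with h0 | h0
    · rw [← h0]; exact hfixt0
    · exact hfixt x ⟨h0, hx.2⟩
  have hu'S : u' ∈ S := by
    show u' ∈ Metric.closedBall (0 : C(Icc (0:ℝ) r, ℝ)) R
    rw [mem_closedBall_zero_iff]; exact hu'b
  have hfixPt : Φ ⟨u', hu'S⟩ = ⟨u', hu'S⟩ := by
    apply Subtype.ext
    apply ContinuousMap.ext
    intro x
    show Tf a (ext u') x.1 = u' x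
    rw [← hw1, hfixI x.1 x.2, hw1, ext_eq u' x.1 x.2]
  have huniq : (⟨u', hu'S⟩ : S) = u0 := hcontr.fixedPoint_unique hfixPt
  have hw1w0 : w1 = w0 := by
    rw [hw1, hw0, show u' = u0.1 from congrArg Subtype.val huniq]
  intro x hx
  rw [← hQ1 x hx, hw1w0]
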